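/- Let ν > 0 and 0 < C'' ≤ C'. Let w ∈ ℂ with |w| ≤ C' and Re w ≤ −C'', and let θ ∈ ℂ with θ ≠ 0 and Re(1/θ) ≥ 1. Then |1 − (w/ν)·(1/θ − 1)| ≥ (C''/C')². -/

import Mathlib

open Complex

/-- For `ν > 0`, `0 < C'' ≤ C'`, `w ∈ ℂ` with `|w| ≤ C'` and `Re w ≤ -C''`, and `θ ∈ ℂ`
with `θ ≠ 0` and `Re(1/θ) ≥ 1`: `|1 - (w/ν)(1/θ - 1)| ≥ (C''/C')²`. -/
theorem thetaF_denominator_lower_bound (ν C' C'' : ℝ) (hν : 0 < ν)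
    (hC'' : 0 < C'') (hC : C'' ≤ C') (w θ : ℂ)
    (hw₁ : ‖w‖ ≤ C') (hw₂ : w.re ≤ -C'')
    (hθ : θ ≠ 0) (hθre : 1 ≤ (1 / θ).re) :
    (C'' / C') ^ 2 ≤ ‖1 - (w / (ν : ℂ)) * (1 / θ - 1)‖ := by
  set u : ℂ := w / (ν : ℂ) with hu
  set z : ℂ := 1 / θ - 1 with hz
  have hC' : 0 < C' := lt_of_lt_of_le hC'' hC
  have hzre : 0 ≤ z.re := by
    simp only [hz, Complex.sub_re, Complex.one_re]; linarith
  have hure : u.re = w.re / ν := by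
    simp [hu, Complex.div_ofReal_re]
  have hrekey : ((1 - u * z) * (starRingEnd ℂ) u).re ≤ -C'' / ν := by
    have h1 : (1 - u * z) * (starRingEnd ℂ) u
        = (starRingEnd ℂ) u - z * ((Complex.normSq u : ℝ) : ℂ) := by
      rw [← Complex.mul_conj]; ring
    rw [h1]
    have : ((starRingEnd ℂ) u - z * ((Complex.normSq u : ℝ) : ℂ)).re
        = u.re - z.re * Complex.normSq u := by
      simp [Complex.sub_re, Complex.conj_re]
    rw [this, hure]
    have h2 : 0 ≤ z.re * Complex.normSq u :=
      mul_nonneg hzre (Complex.normSq_nonneg u)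
    have h3 : w.re / ν ≤ -C'' / ν := by
      exact div_le_div_of_nonneg_right hw₂ hν.le
    linarith
  have habs : C'' / ν ≤ ‖(1 - u * z) * (starRingEnd ℂ) u‖ := by
    have := Complex.abs_re_le_norm ((1 - u * z) * (starRingEnd ℂ) u)
    have hpos : 0 < C'' / ν := div_pos hC'' hν
    have : -(((1 - u * z) * (starRingEnd ℂ) u).re)
        ≤ ‖(1 - u * z) * (starRingEnd ℂ) u‖ := by
      have := neg_abs_le (((1 - u * z) * (starRingEnd ℂ) u).re)
      linarith [Complex.abs_re_le_norm ((1 - u * z) * (starRingEnd ℂ) u)]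
    have h4 : C'' / ν ≤ -(((1 - u * z) * (starRingEnd ℂ) u).re) := by
      have : -C'' / ν = -(C'' / ν) := by ring
      linarith [hrekey.trans_eq this]
    linarith
  have habsu : ‖u‖ ≤ C' / ν := by
    rw [hu, norm_div, Complex.norm_real, Real.norm_eq_abs, abs_of_pos hν]
    exact div_le_div_of_nonneg_right hw₁ hν.le
  rw [norm_mul, Complex.norm_conj] at habs
  set A := ‖1 - u * z‖ with hA
  have hA0 : 0 ≤ A := norm_nonneg _
  have hkey : C'' / ν ≤ A * (C' / ν) :=
    habs.trans (mul_le_mul_of_nonneg_left habsu hA0)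
  have hkey2 : C'' ≤ A * C' := by
    have := mul_le_mul_of_nonneg_right hkey (le_of_lt hν)
    rw [div_mul_cancel₀ _ hν.ne'] at this
    calc C'' = C'' := rfl
    _ ≤ A * (C' / ν) * ν := this
    _ = A * C' := by field_simp
  rw [div_pow, div_le_iff₀ (by positivity)]
  nlinarith [mul_le_mul_of_nonneg_right hkey2 (le_of_lt hC'),
    mul_le_mul_of_nonneg_left hC (le_of_lt hC'')]
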